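/- Let P(λ) = λ(J₁+R₁) + (J₂+R₂) be an n×n complex posH pencil. If λ₀ ∈ ℂ and x ∈ ℂⁿ are such that x*(λ₀(J₁+R₁) + (J₂+R₂))x = 0, x*(J₁+R₁)x ≠ 0, and the real number −(x*R₁x)(x*R₂x) + (x*J₁x)(x*J₂x) is ≤ 0, then Re λ₀ ≤ 0. -/

import Mathlib

open Matrix
open scoped ComplexOrder

private lemma conj_qf {n : ℕ} (A : Matrix (Fin n) (Fin n) ℂ) (x : Fin n → ℂ) :
    star (star x ⬝ᵥ (A *ᵥ x)) = star x ⬝ᵥ (Aᴴ *ᵥ x) := by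
  rw [star_dotProduct, star_mulVec, star_star, dotProduct_mulVec]

theorem posH_left_half_plane_of_quadratic_condition {n : ℕ}
    (J₁ J₂ R₁ R₂ : Matrix (Fin n) (Fin n) ℂ)
    (hJ₁ : J₁ᴴ = -J₁) (hJ₂ : J₂ᴴ = -J₂)
    (hR₁ : R₁.PosSemidef) (hR₂ : R₂.PosSemidef)
    (lam : ℂ) (x : Fin n → ℂ)
    (hx : star x ⬝ᵥ ((lam • (J₁ + R₁) + (J₂ + R₂)) *ᵥ x) = 0)
    (hne : star x ⬝ᵥ ((J₁ + R₁) *ᵥ x) ≠ 0)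
    (hcond : (-(star x ⬝ᵥ (R₁ *ᵥ x)) * (star x ⬝ᵥ (R₂ *ᵥ x)) +
        (star x ⬝ᵥ (J₁ *ᵥ x)) * (star x ⬝ᵥ (J₂ *ᵥ x))).re ≤ 0) :
    lam.re ≤ 0 := by
  set j₁ := star x ⬝ᵥ (J₁ *ᵥ x) with hj₁
  set j₂ := star x ⬝ᵥ (J₂ *ᵥ x) with hj₂
  set r₁ := star x ⬝ᵥ (R₁ *ᵥ x) with hr₁
  set r₂ := star x ⬝ᵥ (R₂ *ᵥ x) with hr₂
  -- real/imaginary structure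
  have hj₁re : j₁.re = 0 := by
    have := conj_qf J₁ x
    rw [hJ₁, neg_mulVec, dotProduct_neg] at this
    have h2 := congrArg Complex.re this
    simp [Complex.conj_re] at h2 ⊢
    linarith
  have hj₂re : j₂.re = 0 := by
    have := conj_qf J₂ x
    rw [hJ₂, neg_mulVec, dotProduct_neg] at this
    have h2 := congrArg Complex.re this
    simp [Complex.conj_re] at h2 ⊢
    linarith
  have hr₁im : r₁.im = 0 := by
    have := hR₁.dotProduct_mulVec_nonneg x
    rw [Complex.le_def] at this
    simpa [hr₁, Matrix.dotProduct_mulVec] using this.2.symm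
  have hr₂im : r₂.im = 0 := by
    have := hR₂.dotProduct_mulVec_nonneg x
    rw [Complex.le_def] at this
    simpa [hr₂, Matrix.dotProduct_mulVec] using this.2.symm
  -- expand hx
  set p := star x ⬝ᵥ ((J₁ + R₁) *ᵥ x) with hp
  set q := star x ⬝ᵥ ((J₂ + R₂) *ᵥ x) with hq
  have hxx : lam * p + q = 0 := by
    rw [hp, hq, ← hx]
    simp [Matrix.add_mulVec, Matrix.smul_mulVec, dotProduct_add, dotProduct_smul,
      smul_eq_mul, mul_add]
  have hpre : p.re = r₁.re := by
    have : p = j₁ + r₁ := by rw [hp, Matrix.add_mulVec, dotProduct_add]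
    simp [this, hj₁re]
  have hpim : p.im = j₁.im := by
    have : p = j₁ + r₁ := by rw [hp, Matrix.add_mulVec, dotProduct_add]
    simp [this, hr₁im]
  have hqre : q.re = r₂.re := by
    have : q = j₂ + r₂ := by rw [hq, Matrix.add_mulVec, dotProduct_add]
    simp [this, hj₂re]
  have hqim : q.im = j₂.im := by
    have : q = j₂ + r₂ := by rw [hq, Matrix.add_mulVec, dotProduct_add]
    simp [this, hr₂im]
  -- condition in coordinates
  have hcond' : -(r₁.re * r₂.re) - j₁.im * j₂.im ≤ 0 := by
    have : (-r₁ * r₂ + j₁ * j₂).re =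
        -(r₁.re * r₂.re) - j₁.im * j₂.im := by
      simp [Complex.add_re, Complex.mul_re, hr₁im, hr₂im, hj₁re, hj₂re]
      ring
    linarith [hcond, this ▸ hcond]
  -- p ≠ 0
  have hpne : p.re ^ 2 + p.im ^ 2 > 0 := by
    rcases eq_or_ne p 0 with h | h
    · exact absurd h hne
    · have : p.re ≠ 0 ∨ p.im ≠ 0 := by
        by_contra hc
        push_neg at hc
        exact h (Complex.ext hc.1 hc.2)
      rcases this with h' | h' <;> positivity
  -- real and imaginary parts of hxx
  have h1 : lam.re * p.re - lam.im * p.im + q.re = 0 := by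
    have := congrArg Complex.re hxx
    simpa [Complex.add_re, Complex.mul_re] using this
  have h2 : lam.re * p.im + lam.im * p.re + q.im = 0 := by
    have := congrArg Complex.im hxx
    simpa [Complex.add_im, Complex.mul_im] using this
  have key : lam.re * (p.re ^ 2 + p.im ^ 2) = -(q.re * p.re + q.im * p.im) := by
    linear_combination p.re * h1 + p.im * h2
  have hnum : q.re * p.re + q.im * p.im ≥ 0 := by
    rw [hpre, hpim, hqre, hqim]
    nlinarith [hcond']
  nlinarith [key, hnum, hpne]
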